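/- Let f(x) = (1 − x^α)^{1/α} with 1 < α < 2. Then for 0 < x < 2^{−1/α}: x^α/α ≤ 1 − f(x) ≤ 2^{1 − 1/α} · x^α/α. -/

import Mathlib

theorem one_sub_f_bounds (α : ℝ) (hα1 : 1 < α) (hα2 : α < 2)
    (f : ℝ → ℝ) (hf : f = fun x => (1 - x ^ α) ^ (1 / α)) :
    ∀ x ∈ Set.Ioo (0 : ℝ) ((2 : ℝ) ^ (-1 / α)),
      x ^ α / α ≤ 1 - f x ∧ 1 - f x ≤ (2 : ℝ) ^ (1 - 1 / α) * (x ^ α / α) := by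
  intro x hx
  obtain ⟨hx0, hx1⟩ := hx
  have hα0 : (0:ℝ) < α := by linarith
  simp only [hf]
  set t := x ^ α with htdef
  have ht0 : 0 < t := Real.rpow_pos_of_pos hx0 α
  have ht2 : t < 1/2 := by
    have h := Real.rpow_lt_rpow hx0.le hx1 hα0
    rw [← Real.rpow_mul (by norm_num : (0:ℝ) ≤ 2), div_mul_cancel₀ _ hα0.ne'] at h
    rw [Real.rpow_neg (by norm_num : (0:ℝ) ≤ 2), Real.rpow_one] at h
    rw [htdef]; linarith [h]
  have h1t : (0:ℝ) < 1 - t := by linarith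
  -- lower bound
  have htα1 : t / α ≤ 1 := by rw [div_le_one hα0]; linarith
  have hta : (0:ℝ) ≤ 1 - t / α := by linarith
  have hb1 : 1 - t ≤ (1 - t / α) ^ α := by
    have hs : (-1:ℝ) ≤ -(t / α) := by linarith
    have hb := one_add_mul_self_le_rpow_one_add hs hα1.le
    have he1 : α * -(t / α) = -t := by field_simp
    have he2 : (1:ℝ) + -(t / α) = 1 - t / α := by ring
    rw [he1, he2] at hb
    linarith [hb]
  have hfle : (1 - t) ^ (1/α) ≤ 1 - t / α := by
    have h := Real.rpow_le_rpow h1t.le hb1 (by positivity : (0:ℝ) ≤ 1/α)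
    rwa [← Real.rpow_mul hta, mul_one_div_cancel hα0.ne', Real.rpow_one] at h
  set v := (1 - t) ^ (1/α) with hvdef
  have hv0 : 0 < v := Real.rpow_pos_of_pos h1t _
  have hvα : v ^ α = 1 - t := by
    rw [hvdef, ← Real.rpow_mul h1t.le, one_div_mul_cancel hα0.ne', Real.rpow_one]
  have hv1 : v < 1 := Real.rpow_lt_one h1t.le (by linarith) (by positivity)
  refine ⟨by linarith, ?_⟩
  -- upper bound
  have hvlb : (2:ℝ) ^ (-1/α) ≤ v := by
    have h := Real.rpow_le_rpow (by norm_num : (0:ℝ) ≤ 1/2) (by linarith : (1:ℝ)/2 ≤ 1 - t)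
      (by positivity : (0:ℝ) ≤ 1/α)
    have he : ((1:ℝ)/2) ^ ((1:ℝ)/α) = (2:ℝ) ^ (-1/α) := by
      rw [one_div, Real.inv_rpow (by norm_num : (0:ℝ) ≤ 2),
        ← Real.rpow_neg (by norm_num : (0:ℝ) ≤ 2), neg_div', neg_div]
    rw [he] at h
    exact h
  set w := v ^ (α - 1) with hwdef
  have hw0 : 0 < w := Real.rpow_pos_of_pos hv0 _
  have hvw : v * w = v ^ α := by
    calc v * w = v ^ (1:ℝ) * v ^ (α - 1) := by rw [Real.rpow_one]
      _ = v ^ (1 + (α - 1)) := (Real.rpow_add hv0 _ _).symm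
      _ = v ^ α := by ring_nf
  have hs2 : (-1:ℝ) ≤ 1/v - 1 := by
    have : (0:ℝ) < 1/v := by positivity
    linarith
  have hb2 := one_add_mul_self_le_rpow_one_add hs2 hα1.le
  have h1v : (1:ℝ) + (1/v - 1) = 1/v := by ring
  rw [h1v] at hb2
  have hinv : (1/v) ^ α = (v ^ α)⁻¹ := by rw [one_div, Real.inv_rpow hv0.le]
  rw [hinv, hvα] at hb2
  -- hb2 : 1 + α * (1/v - 1) ≤ (1 - t)⁻¹
  have h3 : (1 + α * (1/v - 1)) * (1 - t) ≤ 1 := by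
    calc (1 + α * (1/v - 1)) * (1 - t) ≤ (1 - t)⁻¹ * (1 - t) :=
          mul_le_mul_of_nonneg_right hb2 h1t.le
      _ = 1 := inv_mul_cancel₀ h1t.ne'
  have hvw' : 1 - t = v * w := by rw [hvw, hvα]
  have hexp : (1 + α * (1/v - 1)) * (v * w) = v * w + α * w - α * (v * w) := by
    field_simp
    ring
  rw [hvw', hexp] at h3
  have key : α * w * (1 - v) ≤ t := by nlinarith [h3, hvw']
  have hwlb : (2:ℝ) ^ ((-1/α) * (α - 1)) ≤ w := by
    have h := Real.rpow_le_rpow (by positivity) hvlb (by linarith : (0:ℝ) ≤ α - 1)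
    rwa [← Real.rpow_mul (by norm_num : (0:ℝ) ≤ 2)] at h
  set c := (2:ℝ) ^ ((-1/α) * (α - 1)) with hcdef
  have hc0 : 0 < c := Real.rpow_pos_of_pos (by norm_num) _
  have hc : (2:ℝ) ^ (1 - 1/α) * c = 1 := by
    rw [hcdef, ← Real.rpow_add (by norm_num : (0:ℝ) < 2)]
    have he : (1 - 1/α) + (-1/α) * (α - 1) = 0 := by field_simp; ring
    rw [he, Real.rpow_zero]
  have h4 : α * (c * (1 - v)) ≤ t := by
    nlinarith [key, mul_le_mul_of_nonneg_right hwlb (by linarith : (0:ℝ) ≤ 1 - v), hα0]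
  have hB : (2:ℝ) ^ (1 - 1/α) = 1/c := by
    rw [eq_div_iff hc0.ne']
    exact hc
  have heq : (1/c) * (t/α) = t / (α * c) := by
    rw [div_mul_div_comm, one_mul, mul_comm]
  rw [hB, heq, le_div_iff₀ (by positivity : (0:ℝ) < α * c)]
  have hring : (1 - v) * (α * c) = α * (c * (1 - v)) := by ring
  linarith [h4, hring]
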